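/- Let f and g be probability densities on ℝ with finite first moments and let φ: 𝕋 → ℝ be continuous with φ ≥ ε > 0 and ∫_𝕋 φ = 1. Define M_f(x) = (∫∫ f(y,w) φ(x-y) w dy dw)/(∫∫ f(y,w) φ(x-y) dy dw) for densities f(y,w) on 𝕋 × ℝ with mass 1, and similarly M_g. Then |M_f(x) - M_g(x)| ≤ C (‖(f-g)√(1+w²)‖_{L¹} + ‖f-g‖_{L¹}) for a constant C depending only on ε, ‖φ‖_∞, and the first moment of g. -/

import Mathlib

set_option maxHeartbeats 1000000

open Real MeasureTheory Filter Topology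

/-- Lipschitz-type estimate for the weighted local mean velocity M_f in terms of
weighted L¹ distances of the densities. The torus 𝕋 is represented by
1-periodic functions in x, with densities supported on the strip (0,1] × ℝ. -/
theorem stmt14 (ε : ℝ) (hε : 0 < ε) (φ : ℝ → ℝ) (hφc : Continuous φ)
    (hφper : ∀ x, φ (x+1) = φ x) (hφε : ∀ x, ε ≤ φ x)
    (hφnorm : ∫ x in (0:ℝ)..1, φ x = 1)
    (g : ℝ × ℝ → ℝ) (hg0 : ∀ p, 0 ≤ g p)
    (hgi : IntegrableOn g (Set.Ioc (0:ℝ) 1 ×ˢ Set.univ))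
    (hgm : IntegrableOn (fun p => |p.2| * g p) (Set.Ioc (0:ℝ) 1 ×ˢ Set.univ))
    (hgnorm : ∫ p in Set.Ioc (0:ℝ) 1 ×ˢ Set.univ, g p = 1) :
    ∃ C : ℝ, 0 < C ∧ ∀ f : ℝ × ℝ → ℝ, (∀ p, 0 ≤ f p) →
      IntegrableOn f (Set.Ioc (0:ℝ) 1 ×ˢ Set.univ) →
      IntegrableOn (fun p => |p.2| * f p) (Set.Ioc (0:ℝ) 1 ×ˢ Set.univ) →
      (∫ p in Set.Ioc (0:ℝ) 1 ×ˢ Set.univ, f p) = 1 →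
      ∀ x : ℝ,
        |(∫ p in Set.Ioc (0:ℝ) 1 ×ˢ Set.univ, f p * φ (x - p.1) * p.2)
            / (∫ p in Set.Ioc (0:ℝ) 1 ×ˢ Set.univ, f p * φ (x - p.1))
          - (∫ p in Set.Ioc (0:ℝ) 1 ×ˢ Set.univ, g p * φ (x - p.1) * p.2)
            / (∫ p in Set.Ioc (0:ℝ) 1 ×ˢ Set.univ, g p * φ (x - p.1))|
        ≤ C * ((∫ p in Set.Ioc (0:ℝ) 1 ×ˢ Set.univ,
                  |f p - g p| * Real.sqrt (1 + p.2^2))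
               + ∫ p in Set.Ioc (0:ℝ) 1 ×ˢ Set.univ, |f p - g p|) := by
  set s : Set (ℝ × ℝ) := Set.Ioc (0:ℝ) 1 ×ˢ Set.univ with hs_def
  have hsm : MeasurableSet s := measurableSet_Ioc.prod MeasurableSet.univ
  -- Upper bound K on φ
  obtain ⟨x₀, hx₀, hmax⟩ := isCompact_Icc.exists_isMaxOn
    (Set.nonempty_Icc.mpr (by norm_num : (0:ℝ) ≤ 1)) (hφc.continuousOn (s := Set.Icc 0 1))
  set K : ℝ := φ x₀ with hK_def
  have hper : Function.Periodic φ 1 := hφper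
  have hK : ∀ y, φ y ≤ K := by
    intro y
    have h1 : φ (y - (⌊y⌋ : ℝ) * 1) = φ y := hper.sub_int_mul_eq ⌊y⌋
    rw [← h1]
    apply hmax
    constructor
    · have := Int.fract_nonneg y
      simp only [Int.fract] at this
      linarith
    · have := Int.fract_lt_one y
      simp only [Int.fract] at this
      linarith
  have hεK : ε ≤ K := hφε x₀
  have hK0 : 0 < K := lt_of_lt_of_le hε hεK
  set M : ℝ := ∫ p in s, |p.2| * g p with hM_def
  have hM0 : 0 ≤ M := setIntegral_nonneg hsm fun p _ => mul_nonneg (abs_nonneg _) (hg0 p)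
  set c1 : ℝ := K / ε with hc1_def
  set c2 : ℝ := K ^ 2 * M / ε ^ 2 with hc2_def
  have hc1 : 0 ≤ c1 := by positivity
  have hc2 : 0 ≤ c2 := by positivity
  refine ⟨c1 + c2 + 1, by positivity, ?_⟩
  intro f hf0 hfi hfm hfnorm x
  have hΦ0 : ∀ p : ℝ × ℝ, 0 ≤ φ (x - p.1) := fun p => le_trans hε.le (hφε _)
  have hΦK : ∀ p : ℝ × ℝ, φ (x - p.1) ≤ K := fun p => hK _
  have hΦm : AEStronglyMeasurable (fun p : ℝ × ℝ => φ (x - p.1)) (volume.restrict s) :=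
    (hφc.comp (continuous_const.sub continuous_fst)).aestronglyMeasurable
  -- Integrability of the four integrands
  have int_a : ∀ h : ℝ × ℝ → ℝ, IntegrableOn h s →
      IntegrableOn (fun p => h p * φ (x - p.1)) s := by
    intro h hh
    have h1 : IntegrableOn (fun p => φ (x - p.1) * h p) s :=
      Integrable.bdd_mul hh hΦm (ae_of_all _ fun p => by
        rw [Real.norm_eq_abs, abs_of_nonneg (hΦ0 p)]; exact hΦK p)
    exact h1.congr (Filter.Eventually.of_forall fun p => mul_comm _ _)
  have int_b : ∀ h : ℝ × ℝ → ℝ, (∀ p, 0 ≤ h p) → IntegrableOn h s →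
      IntegrableOn (fun p => |p.2| * h p) s →
      IntegrableOn (fun p => h p * φ (x - p.1) * p.2) s := by
    intro h h0 hh hhm
    have hwh : IntegrableOn (fun p : ℝ × ℝ => p.2 * h p) s := by
      refine Integrable.mono' hhm
        ((continuous_snd.aestronglyMeasurable).mul hh.aestronglyMeasurable)
        (Filter.Eventually.of_forall fun p => ?_)
      rw [Real.norm_eq_abs, abs_mul, abs_of_nonneg (h0 p)]
    have h1 : IntegrableOn (fun p : ℝ × ℝ => φ (x - p.1) * (p.2 * h p)) s :=
      Integrable.bdd_mul hwh hΦm (ae_of_all _ fun p => by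
        rw [Real.norm_eq_abs, abs_of_nonneg (hΦ0 p)]; exact hΦK p)
    exact h1.congr (Filter.Eventually.of_forall fun p => by ring)
  have intaf := int_a f hfi
  have intag := int_a g hgi
  have intbf := int_b f hf0 hfi hfm
  have intbg := int_b g hg0 hgi hgm
  set af : ℝ := ∫ p in s, f p * φ (x - p.1) with haf_def
  set ag : ℝ := ∫ p in s, g p * φ (x - p.1) with hag_def
  set bf : ℝ := ∫ p in s, f p * φ (x - p.1) * p.2 with hbf_def
  set bg : ℝ := ∫ p in s, g p * φ (x - p.1) * p.2 with hbg_def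
  -- lower bounds on denominators
  have lb : ∀ h : ℝ × ℝ → ℝ, (∀ p, 0 ≤ h p) → IntegrableOn h s →
      (∫ p in s, h p) = 1 → ε ≤ ∫ p in s, h p * φ (x - p.1) := by
    intro h h0 hh hnorm
    have h1 : (∫ p in s, ε * h p) ≤ ∫ p in s, h p * φ (x - p.1) := by
      refine integral_mono (hh.const_mul ε) (int_a h hh) fun p => ?_
      have := hφε (x - p.1)
      nlinarith [h0 p]
    rwa [integral_const_mul, hnorm, mul_one] at h1
  have haf_lb : ε ≤ af := lb f hf0 hfi hfnorm
  have hag_lb : ε ≤ ag := lb g hg0 hgi hgnorm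
  have haf_pos : 0 < af := lt_of_lt_of_le hε haf_lb
  have hag_pos : 0 < ag := lt_of_lt_of_le hε hag_lb
  -- the two L¹ distances
  set D1 : ℝ := ∫ p in s, |f p - g p| * Real.sqrt (1 + p.2 ^ 2) with hD1_def
  set D2 : ℝ := ∫ p in s, |f p - g p| with hD2_def
  have hfg : IntegrableOn (fun p => f p - g p) s := hfi.sub hgi
  have hD2i : IntegrableOn (fun p => |f p - g p|) s := hfg.abs
  have hsqrt : ∀ w : ℝ, |w| ≤ Real.sqrt (1 + w ^ 2) := by
    intro w
    rw [← Real.sqrt_sq_eq_abs]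
    exact Real.sqrt_le_sqrt (by nlinarith)
  have hD1i : IntegrableOn (fun p => |f p - g p| * Real.sqrt (1 + p.2 ^ 2)) s := by
    refine Integrable.mono' (((hfi.add hgi).add (hfm.add hgm)))
      (hD2i.aestronglyMeasurable.mul
        ((continuous_const.add (continuous_snd.pow 2)).sqrt.aestronglyMeasurable))
      (Filter.Eventually.of_forall fun p => ?_)
    have h1 : |f p - g p| ≤ f p + g p := by
      have := hf0 p; have := hg0 p
      rw [abs_le]; constructor <;> nlinarith
    have h2 : Real.sqrt (1 + p.2 ^ 2) ≤ 1 + |p.2| := by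
      rw [show (1:ℝ) + |p.2| = Real.sqrt ((1 + |p.2|) ^ 2) from
        (Real.sqrt_sq (by positivity)).symm]
      exact Real.sqrt_le_sqrt (by nlinarith [abs_nonneg p.2, sq_abs p.2])
    have h3 : 0 ≤ Real.sqrt (1 + p.2 ^ 2) := Real.sqrt_nonneg _
    rw [Real.norm_eq_abs, abs_of_nonneg (mul_nonneg (abs_nonneg _) h3)]
    have h4 := abs_nonneg (f p - g p)
    have h5 := abs_nonneg p.2
    have h6 := hf0 p; have h7 := hg0 p
    simp only [Pi.add_apply]
    nlinarith [mul_le_mul h1 h2 h3 (by linarith : (0:ℝ) ≤ f p + g p)]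
  have hD1nn : 0 ≤ D1 :=
    setIntegral_nonneg hsm fun p _ => mul_nonneg (abs_nonneg _) (Real.sqrt_nonneg _)
  have hD2nn : 0 ≤ D2 := setIntegral_nonneg hsm fun p _ => abs_nonneg _
  -- |bf - bg| ≤ K * D1
  have hb_bd : |bf - bg| ≤ K * D1 := by
    have h1 : bf - bg = ∫ p in s, (f p * φ (x - p.1) * p.2 - g p * φ (x - p.1) * p.2) :=
      (integral_sub intbf intbg).symm
    rw [h1]
    calc |∫ p in s, (f p * φ (x - p.1) * p.2 - g p * φ (x - p.1) * p.2)|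
        ≤ ∫ p in s, |f p * φ (x - p.1) * p.2 - g p * φ (x - p.1) * p.2| := by
          simpa only [Real.norm_eq_abs] using
            norm_integral_le_integral_norm (μ := volume.restrict s)
              (fun p => f p * φ (x - p.1) * p.2 - g p * φ (x - p.1) * p.2)
      _ ≤ ∫ p in s, K * (|f p - g p| * Real.sqrt (1 + p.2 ^ 2)) := by
          refine integral_mono (intbf.sub intbg).abs (hD1i.const_mul K) fun p => ?_
          have e1 : f p * φ (x - p.1) * p.2 - g p * φ (x - p.1) * p.2
              = (f p - g p) * φ (x - p.1) * p.2 := by ring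
          rw [e1, abs_mul, abs_mul, abs_of_nonneg (hΦ0 p)]
          have h2 := hsqrt p.2
          have h3 := hΦ0 p; have h4 := hΦK p
          have h5 := abs_nonneg (f p - g p); have h6 := abs_nonneg p.2
          nlinarith [mul_le_mul_of_nonneg_left (mul_le_mul h4 h2 h6 hK0.le) h5]
      _ = K * D1 := integral_const_mul K _
  -- |ag - af| ≤ K * D2
  have ha_bd : |ag - af| ≤ K * D2 := by
    have h1 : af - ag = ∫ p in s, (f p * φ (x - p.1) - g p * φ (x - p.1)) :=
      (integral_sub intaf intag).symm
    rw [abs_sub_comm, h1]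
    calc |∫ p in s, (f p * φ (x - p.1) - g p * φ (x - p.1))|
        ≤ ∫ p in s, |f p * φ (x - p.1) - g p * φ (x - p.1)| := by
          simpa only [Real.norm_eq_abs] using
            norm_integral_le_integral_norm (μ := volume.restrict s)
              (fun p => f p * φ (x - p.1) - g p * φ (x - p.1))
      _ ≤ ∫ p in s, K * |f p - g p| := by
          refine integral_mono (intaf.sub intag).abs (hD2i.const_mul K) fun p => ?_
          have e1 : f p * φ (x - p.1) - g p * φ (x - p.1) = (f p - g p) * φ (x - p.1) := by
            ring
          rw [e1, abs_mul, abs_of_nonneg (hΦ0 p)]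
          have h3 := hΦK p
          have h5 := abs_nonneg (f p - g p)
          nlinarith
      _ = K * D2 := integral_const_mul K _
  -- |bg| ≤ K * M
  have hbg_bd : |bg| ≤ K * M := by
    calc |bg| ≤ ∫ p in s, |g p * φ (x - p.1) * p.2| := by
          simpa only [Real.norm_eq_abs] using
            norm_integral_le_integral_norm (μ := volume.restrict s)
              (fun p => g p * φ (x - p.1) * p.2)
      _ ≤ ∫ p in s, K * (|p.2| * g p) := by
          refine integral_mono intbg.abs (hgm.const_mul K) fun p => ?_
          rw [abs_mul, abs_mul, abs_of_nonneg (hg0 p), abs_of_nonneg (hΦ0 p)]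
          have h3 := hΦK p; have h4 := hΦ0 p
          have h5 := hg0 p; have h6 := abs_nonneg p.2
          nlinarith [mul_le_mul_of_nonneg_right (mul_le_mul_of_nonneg_left h3 h5) h6]
      _ = K * M := integral_const_mul K _
  -- assemble
  have key : bf / af - bg / ag = (bf - bg) / af + bg * (ag - af) / (af * ag) := by
    field_simp
    ring
  calc |bf / af - bg / ag|
      ≤ |(bf - bg) / af| + |bg * (ag - af) / (af * ag)| := by rw [key]; exact abs_add_le _ _
    _ = |bf - bg| / af + |bg| * |ag - af| / (af * ag) := by
        rw [abs_div, abs_div, abs_mul, abs_of_pos haf_pos, abs_of_pos (mul_pos haf_pos hag_pos)]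
    _ ≤ (K * D1) / ε + (K * M) * (K * D2) / (ε * ε) := by
        refine add_le_add ?_ ?_
        · exact div_le_div₀ (by positivity) hb_bd hε haf_lb
        · refine div_le_div₀ (by positivity) ?_ (by positivity) ?_
          · exact mul_le_mul hbg_bd ha_bd (abs_nonneg _) (by positivity)
          · exact mul_le_mul haf_lb hag_lb hε.le haf_pos.le
    _ = c1 * D1 + c2 * D2 := by rw [hc1_def, hc2_def]; ring
    _ ≤ (c1 + c2 + 1) * (D1 + D2) := by nlinarith
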